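/- Let r > 0, N ≥ 3, ε ∈ (0, π/(2N)), α1 = π/N + ((N-1)/N)·ε. Define h = 2r·sin(α1) - 2r·(cos(π/N) - cos(α1))/tan(ε). Then h → (2r/N)·sin(π/N) as ε → 0⁺; more precisely there is a constant C > 0 depending only on r and N such that |h - (2r/N)·sin(π/N)| ≤ C·ε for all ε ∈ (0, π/(2N)). -/

import Mathlib

open Real

/-- Key quantitative bound: the deviation of `h(ε)` from its limit is at most `6 r ε`. -/
lemma stmt_18_aux (r : ℝ) (hr : 0 < r) (N : ℕ) (hN : 3 ≤ N) :
    ∀ ε : ℝ, ε ∈ Set.Ioo 0 (Real.pi / (2 * N)) →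
      |2 * r * Real.sin (Real.pi / N + ((N : ℝ) - 1) / N * ε)
          - 2 * r * (Real.cos (Real.pi / N)
              - Real.cos (Real.pi / N + ((N : ℝ) - 1) / N * ε)) / Real.tan ε
        - (2 * r / N) * Real.sin (Real.pi / N)| ≤ (6 * r) * ε := by
  intro ε hε
  obtain ⟨hε0, hεlt⟩ := hε
  have hN3 : (3 : ℝ) ≤ (N : ℝ) := by exact_mod_cast hN
  have hNpos : (0 : ℝ) < (N : ℝ) := by linarith
  have hNne : (N : ℝ) ≠ 0 := ne_of_gt hNpos
  set a : ℝ := Real.pi / N with ha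
  set k : ℝ := ((N : ℝ) - 1) / N with hk
  have hk0 : 0 < k := by
    apply div_pos <;> linarith
  have hk1 : k ≤ 1 := by
    rw [hk, div_le_one hNpos]; linarith
  have hpi4 : Real.pi ≤ 4 := Real.pi_le_four
  have hpipos := Real.pi_pos
  -- ε < π/2 and ε ≤ 1
  have hεhalf : ε < Real.pi / 2 := by
    have : Real.pi / (2 * N) ≤ Real.pi / 6 := by
      apply div_le_div_of_nonneg_left (le_of_lt hpipos) (by norm_num) (by linarith)
    linarith
  have hε1 : ε ≤ 1 := by
    have : Real.pi / (2 * N) ≤ Real.pi / 6 := by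
      apply div_le_div_of_nonneg_left (le_of_lt hpipos) (by norm_num) (by linarith)
    linarith
  set u : ℝ := k * ε with hu
  have hu0 : 0 < u := mul_pos hk0 hε0
  have huε : u ≤ ε := by
    rw [hu]; exact mul_le_of_le_one_left hε0.le hk1
  have hu1 : u ≤ 1 := le_trans huε hε1
  -- basic trig bounds
  have habs_cos_a : |Real.cos a| ≤ 1 := Real.abs_cos_le_one a
  have habs_sin_a : |Real.sin a| ≤ 1 := Real.abs_sin_le_one a
  have habs_cos_ε : |Real.cos ε| ≤ 1 := Real.abs_cos_le_one ε
  -- |1 - cos u| ≤ u²/2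
  have hcos_u : |1 - Real.cos u| ≤ u ^ 2 / 2 := by
    have h1 : 1 - u ^ 2 / 2 ≤ Real.cos u := Real.one_sub_sq_div_two_le_cos
    have h2 : Real.cos u ≤ 1 := Real.cos_le_one u
    have h3 : 0 ≤ u ^ 2 := sq_nonneg u
    rw [abs_le]; constructor <;> linarith
  -- |sin u - u| ≤ u³/4
  have hsin_u : |Real.sin u - u| ≤ u ^ 3 / 4 := by
    have h1 : u - u ^ 3 / 4 < Real.sin u := by have := Real.sin_gt_sub_cube hu0; linarith [pow_pos hu0 3]
    have h2 : Real.sin u < u := Real.sin_lt hu0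
    have h3 : 0 < u ^ 3 := pow_pos hu0 3
    rw [abs_le]; constructor <;> linarith
  -- |1 - cos ε| ≤ ε²/2, |sin ε - ε| ≤ ε³/4
  have hcos_ε : |1 - Real.cos ε| ≤ ε ^ 2 / 2 := by
    have h1 : 1 - ε ^ 2 / 2 ≤ Real.cos ε := Real.one_sub_sq_div_two_le_cos
    have h2 : Real.cos ε ≤ 1 := Real.cos_le_one ε
    have h3 : 0 ≤ ε ^ 2 := sq_nonneg ε
    rw [abs_le]; constructor <;> linarith
  have hsin_ε : |Real.sin ε - ε| ≤ ε ^ 3 / 4 := by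
    have h1 : ε - ε ^ 3 / 4 < Real.sin ε := by have := Real.sin_gt_sub_cube hε0; linarith [pow_pos hε0 3]
    have h2 : Real.sin ε < ε := Real.sin_lt hε0
    have h3 : 0 < ε ^ 3 := pow_pos hε0 3
    rw [abs_le]; constructor <;> linarith
  have hεsq : ε ^ 2 ≤ 1 := by nlinarith [sq_nonneg ε]
  have hεcube : ε ^ 3 ≤ ε ^ 2 := by
    calc ε ^ 3 = ε ^ 2 * ε := by ring
      _ ≤ ε ^ 2 * 1 := mul_le_mul_of_nonneg_left hε1 (sq_nonneg ε)
      _ = ε ^ 2 := by ring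
  have hεcube' : ε ^ 3 ≤ ε := by
    calc ε ^ 3 = ε * ε ^ 2 := by ring
      _ ≤ ε * 1 := mul_le_mul_of_nonneg_left hεsq hε0.le
      _ = ε := by ring
  have hsinε_lb : 3 / 4 * ε ≤ Real.sin ε := by
    have h1 : ε - ε ^ 3 / 4 < Real.sin ε := by have := Real.sin_gt_sub_cube hε0; linarith [pow_pos hε0 3]
    linarith
  have hsinε_pos : 0 < Real.sin ε := by linarith
  have hcosε_pos : 0 < Real.cos ε := Real.cos_pos_of_mem_Ioo ⟨by linarith, hεhalf⟩
  -- |ε cos ε - sin ε| ≤ (3/4) ε³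
  have hEC : |ε * Real.cos ε - Real.sin ε| ≤ 3 / 4 * ε ^ 3 := by
    have h := abs_mul ε (1 - Real.cos ε)
    have h1 : |ε * (1 - Real.cos ε)| ≤ ε ^ 3 / 2 := by
      rw [h, abs_of_pos hε0]
      calc ε * |1 - Real.cos ε| ≤ ε * (ε ^ 2 / 2) := by
            exact mul_le_mul_of_nonneg_left hcos_ε (le_of_lt hε0)
        _ = ε ^ 3 / 2 := by ring
    calc |ε * Real.cos ε - Real.sin ε|
        = |(-(ε * (1 - Real.cos ε))) + (-(Real.sin ε - ε))| := by ring_nf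
      _ ≤ |(-(ε * (1 - Real.cos ε)))| + |(-(Real.sin ε - ε))| := abs_add_le _ _
      _ = |ε * (1 - Real.cos ε)| + |Real.sin ε - ε| := by rw [abs_neg, abs_neg]
      _ ≤ ε ^ 3 / 2 + ε ^ 3 / 4 := add_le_add h1 hsin_ε
      _ = 3 / 4 * ε ^ 3 := by ring
  -- |D - u sin a| ≤ (3/4) ε²  where D = cos a - cos (a + u)
  set D : ℝ := Real.cos a - Real.cos (a + u) with hD
  have hR1 : |D - u * Real.sin a| ≤ 3 / 4 * ε ^ 2 := by
    have hadd : Real.cos (a + u) = Real.cos a * Real.cos u - Real.sin a * Real.sin u :=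
      Real.cos_add a u
    have heq : D - u * Real.sin a
        = Real.cos a * (1 - Real.cos u) + Real.sin a * (Real.sin u - u) := by
      rw [hD, hadd]; ring
    calc |D - u * Real.sin a|
        = |Real.cos a * (1 - Real.cos u) + Real.sin a * (Real.sin u - u)| := by rw [heq]
      _ ≤ |Real.cos a * (1 - Real.cos u)| + |Real.sin a * (Real.sin u - u)| := abs_add_le _ _
      _ = |Real.cos a| * |1 - Real.cos u| + |Real.sin a| * |Real.sin u - u| := by
          rw [abs_mul, abs_mul]
      _ ≤ 1 * (u ^ 2 / 2) + 1 * (u ^ 3 / 4) := by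
          apply add_le_add
          · exact mul_le_mul habs_cos_a hcos_u (abs_nonneg _) zero_le_one
          · exact mul_le_mul habs_sin_a hsin_u (abs_nonneg _) zero_le_one
      _ ≤ 3 / 4 * ε ^ 2 := by
          have hu2 : u ^ 2 ≤ ε ^ 2 := pow_le_pow_left₀ hu0.le huε 2
          have hu3 : u ^ 3 ≤ ε ^ 3 := pow_le_pow_left₀ hu0.le huε 3
          linarith
  -- numerator bound
  have hnum : |D * Real.cos ε - k * Real.sin a * Real.sin ε| ≤ 3 / 2 * ε ^ 2 := by
    have heq : D * Real.cos ε - k * Real.sin a * Real.sin ε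
        = (D - u * Real.sin a) * Real.cos ε
          + k * Real.sin a * (ε * Real.cos ε - Real.sin ε) := by
      rw [hu]; ring
    calc |D * Real.cos ε - k * Real.sin a * Real.sin ε|
        = |(D - u * Real.sin a) * Real.cos ε
            + k * Real.sin a * (ε * Real.cos ε - Real.sin ε)| := by rw [heq]
      _ ≤ |(D - u * Real.sin a) * Real.cos ε|
            + |k * Real.sin a * (ε * Real.cos ε - Real.sin ε)| := abs_add_le _ _
      _ = |D - u * Real.sin a| * |Real.cos ε|
            + |k| * |Real.sin a| * |ε * Real.cos ε - Real.sin ε| := by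
          rw [abs_mul, abs_mul, abs_mul]
      _ ≤ (3 / 4 * ε ^ 2) * 1 + 1 * 1 * (3 / 4 * ε ^ 3) := by
          apply add_le_add
          · exact mul_le_mul hR1 habs_cos_ε (abs_nonneg _) (by positivity)
          · apply mul_le_mul _ hEC (abs_nonneg _) (by norm_num)
            apply mul_le_mul _ habs_sin_a (abs_nonneg _) zero_le_one
            rw [abs_of_pos hk0]; exact hk1
      _ ≤ 3 / 2 * ε ^ 2 := by linarith
  -- bound on the fraction term
  have htan : Real.tan ε = Real.sin ε / Real.cos ε := Real.tan_eq_sin_div_cos ε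
  have hfrac : |D / Real.tan ε - k * Real.sin a| ≤ 2 * ε := by
    have heq : D / Real.tan ε - k * Real.sin a
        = (D * Real.cos ε - k * Real.sin a * Real.sin ε) / Real.sin ε := by
      rw [htan]
      field_simp
    rw [heq, abs_div, abs_of_pos hsinε_pos]
    calc |D * Real.cos ε - k * Real.sin a * Real.sin ε| / Real.sin ε
        ≤ (3 / 2 * ε ^ 2) / (3 / 4 * ε) := by
          apply div_le_div₀ (by positivity) hnum (by positivity) hsinε_lb
      _ = 2 * ε := by field_simp; ring
  -- bound on the sine difference
  have hA : |Real.sin (a + u) - Real.sin a| ≤ ε := by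
    have hs : Real.sin (a + u) - Real.sin a
        = 2 * Real.sin ((a + u - a) / 2) * Real.cos ((a + u + a) / 2) := Real.sin_sub_sin _ _
    have h2 : (a + u - a) / 2 = u / 2 := by ring
    rw [hs, h2]
    have hsinu2 : |Real.sin (u / 2)| ≤ u / 2 := by
      have h3 : 0 < u / 2 := by linarith
      have h4 : Real.sin (u / 2) < u / 2 := Real.sin_lt h3
      have h5 : 0 < Real.sin (u / 2) := by
        apply Real.sin_pos_of_pos_of_lt_pi h3
        linarith
      rw [abs_of_pos h5]; linarith
    calc |2 * Real.sin (u / 2) * Real.cos ((a + u + a) / 2)|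
        = 2 * |Real.sin (u / 2)| * |Real.cos ((a + u + a) / 2)| := by
          rw [abs_mul, abs_mul]; norm_num
      _ ≤ 2 * (u / 2) * 1 := by
          apply mul_le_mul _ (Real.abs_cos_le_one _) (abs_nonneg _) (by linarith)
          exact mul_le_mul_of_nonneg_left hsinu2 (by norm_num)
      _ = u := by ring
      _ ≤ ε := huε
  -- identity rewriting the expression
  have hL : (2 * r / (N : ℝ)) * Real.sin a = 2 * r * Real.sin a - 2 * r * (k * Real.sin a) := by
    rw [hk]; field_simp; ring
  have hkey : 2 * r * Real.sin (a + u) - 2 * r * D / Real.tan ε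
      - (2 * r / (N : ℝ)) * Real.sin a
      = 2 * r * (Real.sin (a + u) - Real.sin a)
        - 2 * r * (D / Real.tan ε - k * Real.sin a) := by
    rw [hL]; ring
  -- final estimate
  have hfin : |2 * r * Real.sin (a + u) - 2 * r * D / Real.tan ε
      - (2 * r / (N : ℝ)) * Real.sin a| ≤ 6 * r * ε := by
    rw [hkey]
    calc |2 * r * (Real.sin (a + u) - Real.sin a)
            - 2 * r * (D / Real.tan ε - k * Real.sin a)|
        ≤ |2 * r * (Real.sin (a + u) - Real.sin a)|
            + |2 * r * (D / Real.tan ε - k * Real.sin a)| := abs_sub _ _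
      _ = 2 * r * |Real.sin (a + u) - Real.sin a|
            + 2 * r * |D / Real.tan ε - k * Real.sin a| := by
          simp only [abs_mul, abs_two, abs_of_pos hr]
      _ ≤ 2 * r * ε + 2 * r * (2 * ε) := by
          apply add_le_add
          · exact mul_le_mul_of_nonneg_left hA (by linarith)
          · exact mul_le_mul_of_nonneg_left hfrac (by linarith)
      _ = 6 * r * ε := by ring
  exact hfin

theorem stmt_18 (r : ℝ) (hr : 0 < r) (N : ℕ) (hN : 3 ≤ N) :
    Filter.Tendsto
      (fun ε : ℝ =>
        2 * r * Real.sin (Real.pi / N + ((N : ℝ) - 1) / N * ε)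
          - 2 * r * (Real.cos (Real.pi / N)
              - Real.cos (Real.pi / N + ((N : ℝ) - 1) / N * ε)) / Real.tan ε)
      (nhdsWithin 0 (Set.Ioi 0))
      (nhds ((2 * r / N) * Real.sin (Real.pi / N)))
    ∧ ∃ C : ℝ, 0 < C ∧
        ∀ ε : ℝ, ε ∈ Set.Ioo 0 (Real.pi / (2 * N)) →
          |2 * r * Real.sin (Real.pi / N + ((N : ℝ) - 1) / N * ε)
              - 2 * r * (Real.cos (Real.pi / N)
                  - Real.cos (Real.pi / N + ((N : ℝ) - 1) / N * ε)) / Real.tan ε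
            - (2 * r / N) * Real.sin (Real.pi / N)| ≤ C * ε := by
  have key := stmt_18_aux r hr N hN
  have hN3 : (3 : ℝ) ≤ (N : ℝ) := by exact_mod_cast hN
  have hpipos := Real.pi_pos
  have hbpos : 0 < Real.pi / (2 * N) := by positivity
  constructor
  · rw [← tendsto_sub_nhds_zero_iff]
    apply squeeze_zero_norm'
      (a := fun ε : ℝ => 6 * r * ε)
    · filter_upwards [Ioo_mem_nhdsGT_of_mem
        (Set.mem_Ico.2 ⟨le_refl (0:ℝ), hbpos⟩)] with ε hε
      simpa [Real.norm_eq_abs] using key ε hε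
    · have hc : Continuous (fun ε : ℝ => 6 * r * ε) := by continuity
      have := (hc.tendsto 0).mono_left (nhdsWithin_le_nhds (s := Set.Ioi (0:ℝ)))
      simpa using this
  · exact ⟨6 * r, by linarith, key⟩
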